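/- Consider n balls thrown independently and uniformly at random into m = n/k bins (n = k·m, k ≥ 20, n ≥ 5k, p = 1/m), let B_i be the number of balls in bin i and X = ∑_{i=1}^{m} max(B_i − k, 0). If the spare's capacity is set to 1.1·E[X], then the probability that the spare overflows satisfies P(X > 1.1·E[X]) ≤ min( 2πk/(0.01·0.99·n), exp(−0.01·m·0.99·(1−p)/(πk)) ). -/

import Mathlib

open Finset

/-- Number of balls landing in bin `i` when the throw outcome is `ω`
(ball `j` lands in bin `ω j`). -/
def binCount (n m : ℕ) (i : Fin m) (ω : Fin n → Fin m) : ℕ :=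
  (Finset.univ.filter fun j => ω j = i).card

/-- The total overflow: number of balls exceeding the capacity `k` of their bin. -/
noncomputable def overflowX (n m k : ℕ) (ω : Fin n → Fin m) : ℝ :=
  ∑ i : Fin m, max ((binCount n m i ω : ℝ) - (k : ℝ)) 0

/-- Expectation of a real-valued random variable on the uniform space of
functions `Fin n → Fin m` (balls-into-bins model). -/
noncomputable def expec (n m : ℕ) (f : (Fin n → Fin m) → ℝ) : ℝ :=
  (∑ ω : Fin n → Fin m, f ω) / (Fintype.card (Fin n → Fin m) : ℝ)

open scoped Classical in
/-- Probability of an event on the uniform space of functions `Fin n → Fin m`. -/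
noncomputable def prob (n m : ℕ) (P : (Fin n → Fin m) → Prop) : ℝ :=
  ((Finset.univ.filter P).card : ℝ) / (Fintype.card (Fin n → Fin m) : ℝ)

namespace SpareAux

open Real

variable {m : ℕ}

lemma card_fun_real (n m : ℕ) : ((Fintype.card (Fin n → Fin m) : ℝ)) = (m : ℝ) ^ n := by
  simp [Fintype.card_fun]

lemma sum_cons (n : ℕ) (F : (Fin (n+1) → Fin m) → ℝ) :
    ∑ ω : Fin (n+1) → Fin m, F ω = ∑ a : Fin m, ∑ ρ : Fin n → Fin m, F (Fin.cons a ρ) := by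
  rw [← (Fin.consEquiv (fun _ => Fin m)).sum_comp F, Fintype.sum_prod_type]
  rfl

lemma expec_succ (n : ℕ) (F : (Fin (n+1) → Fin m) → ℝ) :
    expec (n+1) m F = expec n m (fun ρ => (∑ a : Fin m, F (Fin.cons a ρ)) / m) := by
  unfold expec
  rw [sum_cons, card_fun_real, card_fun_real, Finset.sum_comm, ← Finset.sum_div, pow_succ,
    div_div, mul_comm ((m:ℝ)^n) (m:ℝ)]

lemma expec_const (hm : 0 < m) (n : ℕ) (c : ℝ) : expec n m (fun _ => c) = c := by
  unfold expec
  rw [Finset.sum_const, card_univ, Fintype.card_fun, Fintype.card_fin, Fintype.card_fin,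
    nsmul_eq_mul]
  have h : ((m^n : ℕ):ℝ) ≠ 0 := by positivity
  field_simp

lemma expec_mono (hm : 0 < m) {n : ℕ} {f g : (Fin n → Fin m) → ℝ} (h : ∀ ω, f ω ≤ g ω) :
    expec n m f ≤ expec n m g := by
  unfold expec
  have : (0:ℝ) < (Fintype.card (Fin n → Fin m) : ℝ) := by
    rw [card_fun_real]; positivity
  apply div_le_div_of_nonneg_right ?_ this.le
  exact Finset.sum_le_sum fun ω _ => h ω

lemma expec_add {n : ℕ} (f g : (Fin n → Fin m) → ℝ) :
    expec n m (fun ω => f ω + g ω) = expec n m f + expec n m g := by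
  unfold expec; rw [Finset.sum_add_distrib, add_div]

lemma expec_const_mul {n : ℕ} (c : ℝ) (f : (Fin n → Fin m) → ℝ) :
    expec n m (fun ω => c * f ω) = c * expec n m f := by
  unfold expec; rw [← Finset.mul_sum, mul_div_assoc]

lemma expec_sum {n : ℕ} {ι : Type*} (s : Finset ι) (h : ι → (Fin n → Fin m) → ℝ) :
    expec n m (fun ω => ∑ i ∈ s, h i ω) = ∑ i ∈ s, expec n m (h i) := by
  unfold expec; rw [Finset.sum_comm, Finset.sum_div]

lemma expec_nonneg {n : ℕ} {f : (Fin n → Fin m) → ℝ} (h : ∀ ω, 0 ≤ f ω) :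
    0 ≤ expec n m f :=
  div_nonneg (Finset.sum_nonneg fun ω _ => h ω) (Nat.cast_nonneg _)

lemma expec_zero_balls (f : (Fin 0 → Fin m) → ℝ) : expec 0 m f = f (fun i => i.elim0) := by
  unfold expec
  rw [card_fun_real, pow_zero, div_one,
    show f = (fun _ => f (fun i => i.elim0)) from funext fun ω => congrArg f (Subsingleton.elim _ _),
    Finset.sum_const]
  simp


/-! ### binCount basics -/

lemma binCount_real (n : ℕ) (i : Fin m) (ω : Fin n → Fin m) :
    (binCount n m i ω : ℝ) = ∑ j : Fin n, (if ω j = i then (1:ℝ) else 0) := by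
  unfold binCount
  rw [Finset.card_filter]
  push_cast
  exact Finset.sum_congr rfl fun j _ => by split <;> simp

lemma binCount_cons (n : ℕ) (i a : Fin m) (ρ : Fin n → Fin m) :
    (binCount (n+1) m i (Fin.cons a ρ) : ℝ) =
      (if a = i then (1:ℝ) else 0) + binCount n m i ρ := by
  rw [binCount_real, binCount_real, Fin.sum_univ_succ]
  simp

lemma sum_binCount (n : ℕ) (ω : Fin n → Fin m) :
    ∑ i : Fin m, (binCount n m i ω : ℝ) = n := by
  have h : ∀ i : Fin m, (binCount n m i ω : ℝ) = ∑ j : Fin n, (if ω j = i then (1:ℝ) else 0) :=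
    fun i => binCount_real n i ω
  rw [Finset.sum_congr rfl fun i _ => h i, Finset.sum_comm]
  have h2 : ∀ j : Fin n, ∑ i : Fin m, (if ω j = i then (1:ℝ) else 0) = 1 := by
    intro j; simp
  rw [Finset.sum_congr rfl fun j _ => h2 j]
  simp

lemma binCount_update (n : ℕ) (ω : Fin n → Fin m) (j : Fin n) (a : Fin m) (i : Fin m) :
    (binCount n m i (Function.update ω j a) : ℝ) =
      (binCount n m i ω : ℝ) + ((if a = i then (1:ℝ) else 0) - (if ω j = i then 1 else 0)) := by
  rw [binCount_real, binCount_real]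
  have key : ∀ j' : Fin n, (if Function.update ω j a j' = i then (1:ℝ) else 0) =
      (if ω j' = i then (1:ℝ) else 0) +
        (if j' = j then ((if a = i then (1:ℝ) else 0) - (if ω j = i then 1 else 0)) else 0) := by
    intro j'
    rcases eq_or_ne j' j with rfl | hne
    · simp [Function.update_self]
    · simp [Function.update_of_ne hne, hne]
  rw [Finset.sum_congr rfl fun j' _ => key j', Finset.sum_add_distrib, Finset.sum_ite_eq']
  simp

/-! ### Lipschitz-in-one-coordinate condition -/

def Lip (n : ℕ) (f : (Fin n → Fin m) → ℝ) : Prop :=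
  ∀ ω (j : Fin n) (a : Fin m), |f (Function.update ω j a) - f ω| ≤ 1

lemma Lip.pair {n : ℕ} {f : (Fin n → Fin m) → ℝ} (hf : Lip n f) (ω : Fin n → Fin m)
    (j : Fin n) (a b : Fin m) :
    |f (Function.update ω j a) - f (Function.update ω j b)| ≤ 1 := by
  have := hf (Function.update ω j b) j a
  rwa [Function.update_idem] at this

lemma Lip.head {n : ℕ} {f : (Fin (n+1) → Fin m) → ℝ} (hf : Lip (n+1) f)
    (a b : Fin m) (ρ : Fin n → Fin m) :
    |f (Fin.cons a ρ) - f (Fin.cons b ρ)| ≤ 1 := by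
  have := hf.pair (Fin.cons b ρ) 0 a b
  rwa [Fin.update_cons_zero, Fin.update_cons_zero] at this

noncomputable def tailAvg {n : ℕ} (f : (Fin (n+1) → Fin m) → ℝ) : (Fin n → Fin m) → ℝ :=
  fun ρ => (∑ a : Fin m, f (Fin.cons a ρ)) / m

lemma expec_tailAvg {n : ℕ} (f : (Fin (n+1) → Fin m) → ℝ) :
    expec n m (tailAvg f) = expec (n+1) m f := (expec_succ n f).symm

lemma Lip.tailAvg {n : ℕ} {f : (Fin (n+1) → Fin m) → ℝ} (hm : 0 < m) (hf : Lip (n+1) f) :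
    Lip n (SpareAux.tailAvg f) := by
  intro ρ j a
  have hm' : (0:ℝ) < m := by exact_mod_cast hm
  unfold SpareAux.tailAvg
  rw [div_sub_div_same, ← Finset.sum_sub_distrib, abs_div, abs_of_pos hm', div_le_one hm']
  calc |∑ b : Fin m, (f (Fin.cons b (Function.update ρ j a)) - f (Fin.cons b ρ))|
      ≤ ∑ b : Fin m, |f (Fin.cons b (Function.update ρ j a)) - f (Fin.cons b ρ)| :=
        Finset.abs_sum_le_sum_abs _ _
    _ ≤ ∑ _b : Fin m, (1:ℝ) := by
        refine Finset.sum_le_sum fun b _ => ?_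
        rw [Fin.cons_update]
        exact hf (Fin.cons b ρ) j.succ a
    _ = m := by simp

lemma abs_sub_tailAvg_le {n : ℕ} {f : (Fin (n+1) → Fin m) → ℝ} (hm : 0 < m)
    (hf : Lip (n+1) f) (ρ : Fin n → Fin m) (a : Fin m) :
    |f (Fin.cons a ρ) - tailAvg f ρ| ≤ 1 := by
  have hm' : (0:ℝ) < m := by exact_mod_cast hm
  have : f (Fin.cons a ρ) - tailAvg f ρ
      = (∑ b : Fin m, (f (Fin.cons a ρ) - f (Fin.cons b ρ))) / m := by
    unfold SpareAux.tailAvg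
    rw [Finset.sum_sub_distrib, Finset.sum_const, card_univ, Fintype.card_fin, sub_div,
      nsmul_eq_mul, mul_comm, mul_div_assoc, div_self hm'.ne', mul_one]
  rw [this, abs_div, abs_of_pos hm', div_le_one hm']
  calc |∑ b : Fin m, (f (Fin.cons a ρ) - f (Fin.cons b ρ))|
      ≤ ∑ b : Fin m, |f (Fin.cons a ρ) - f (Fin.cons b ρ)| := Finset.abs_sum_le_sum_abs _ _
    _ ≤ ∑ _b : Fin m, (1:ℝ) := Finset.sum_le_sum fun b _ => hf.head a b ρ
    _ = m := by simp

lemma sum_sub_tailAvg {n : ℕ} (f : (Fin (n+1) → Fin m) → ℝ) (hm : 0 < m) (ρ : Fin n → Fin m) :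
    ∑ a : Fin m, (f (Fin.cons a ρ) - tailAvg f ρ) = 0 := by
  have hm' : (0:ℝ) < m := by exact_mod_cast hm
  rw [Finset.sum_sub_distrib, Finset.sum_const, card_univ, Fintype.card_fin, nsmul_eq_mul]
  unfold SpareAux.tailAvg
  field_simp
  ring


/-! ### averaging steps -/

lemma avg_exp_le {Y : Fin m → ℝ} (hm : 0 < m) (h0 : ∑ a, Y a = 0) (hY : ∀ a, |Y a| ≤ 1)
    (l : ℝ) : (∑ a : Fin m, Real.exp (l * Y a)) / m ≤ Real.exp (l^2/2) := by
  have hm' : (0:ℝ) < m := by exact_mod_cast hm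
  have key : ∀ a, Real.exp (l * Y a) ≤ Real.cosh l + Y a * Real.sinh l := by
    intro a
    obtain ⟨h1, h2⟩ := abs_le.1 (hY a)
    have hθ : (0:ℝ) ≤ (1 + Y a)/2 := by linarith
    have hθ' : (0:ℝ) ≤ (1 - Y a)/2 := by linarith
    have hsum : (1 + Y a)/2 + (1 - Y a)/2 = 1 := by ring
    have hc := convexOn_exp.2 (Set.mem_univ l) (Set.mem_univ (-l)) hθ hθ' hsum
    rw [smul_eq_mul, smul_eq_mul] at hc
    have harg : (1 + Y a)/2 * l + (1 - Y a)/2 * (-l) = l * Y a := by ring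
    rw [harg] at hc
    calc Real.exp (l * Y a) ≤ (1 + Y a)/2 * Real.exp l + (1 - Y a)/2 * Real.exp (-l) := hc
      _ = Real.cosh l + Y a * Real.sinh l := by rw [Real.cosh_eq, Real.sinh_eq]; ring
  calc (∑ a : Fin m, Real.exp (l * Y a)) / m
      ≤ (∑ a : Fin m, (Real.cosh l + Y a * Real.sinh l)) / m := by
        apply div_le_div_of_nonneg_right ?_ hm'.le
        exact Finset.sum_le_sum fun a _ => key a
    _ = Real.cosh l := by
        rw [Finset.sum_add_distrib, ← Finset.sum_mul, h0, Finset.sum_const, card_univ,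
          Fintype.card_fin, nsmul_eq_mul]
        field_simp
        ring
    _ ≤ Real.exp (l^2/2) := Real.cosh_le_exp_half_sq l

lemma avg_sq_le {Y : Fin m → ℝ} (hm : 0 < m) (h0 : ∑ a, Y a = 0)
    (hpair : ∀ a b, |Y a - Y b| ≤ 1) : (∑ a : Fin m, (Y a)^2) / m ≤ 1/4 := by
  have hm' : (0:ℝ) < m := by exact_mod_cast hm
  have hne : (Finset.univ : Finset (Fin m)).Nonempty := ⟨⟨0, hm⟩, Finset.mem_univ _⟩
  obtain ⟨a₀, _, ha₀⟩ := Finset.exists_mem_eq_sup' hne Y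
  obtain ⟨b₀, _, hb₀⟩ := Finset.exists_mem_eq_inf' hne Y
  set c : ℝ := (Y a₀ + Y b₀)/2 with hc
  have hd := (abs_le.1 (hpair a₀ b₀)).2
  have hsq : ∀ a, (Y a - c)^2 ≤ 1/4 := by
    intro a
    have h1 : Y a ≤ Y a₀ := ha₀ ▸ Finset.le_sup' Y (Finset.mem_univ a)
    have h2 : Y b₀ ≤ Y a := hb₀ ▸ Finset.inf'_le Y (Finset.mem_univ a)
    have hx1 : Y a - c ≤ 1/2 := by rw [hc]; linarith
    have hx2 : -(1/2) ≤ Y a - c := by rw [hc]; linarith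
    nlinarith
  have expand : ∑ a : Fin m, (Y a)^2 = (∑ a : Fin m, (Y a - c)^2) - m * c^2 := by
    have h : ∀ a : Fin m, (Y a - c)^2 = (Y a)^2 - 2*c*(Y a) + c^2 := fun a => by ring
    rw [Finset.sum_congr rfl fun a _ => h a, Finset.sum_add_distrib, Finset.sum_sub_distrib,
      ← Finset.mul_sum, h0, Finset.sum_const, card_univ, Fintype.card_fin, nsmul_eq_mul]
    ring
  rw [expand, div_le_iff₀ hm']
  have h2 : ∑ a : Fin m, (Y a - c)^2 ≤ (m:ℝ) * (1/4) := by
    calc ∑ a : Fin m, (Y a - c)^2 ≤ ∑ _a : Fin m, (1/4 : ℝ) :=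
          Finset.sum_le_sum fun a _ => hsq a
      _ = (m:ℝ) * (1/4) := by rw [Finset.sum_const, card_univ, Fintype.card_fin, nsmul_eq_mul]
  nlinarith [sq_nonneg c]

/-! ### MGF and variance tensorization -/

lemma mgf_le (hm : 0 < m) : ∀ (n : ℕ) (f : (Fin n → Fin m) → ℝ), Lip n f → ∀ l : ℝ,
    expec n m (fun ω => Real.exp (l * (f ω - expec n m f))) ≤ Real.exp (n * l^2 / 2) := by
  intro n
  induction n with
  | zero =>
    intro f _ l
    rw [expec_zero_balls, expec_zero_balls]
    simp
  | succ n ih =>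
    intro f hf l
    set g := tailAvg f with hgdef
    have hg : expec n m g = expec (n+1) m f := expec_tailAvg f
    set μ := expec (n+1) m f with hμ
    rw [expec_succ]
    have point : ∀ ρ : Fin n → Fin m,
        (∑ a : Fin m, Real.exp (l * (f (Fin.cons a ρ) - μ)))/m
          ≤ Real.exp (l^2/2) * Real.exp (l * (g ρ - μ)) := by
      intro ρ
      have hfactor : ∀ a : Fin m, Real.exp (l * (f (Fin.cons a ρ) - μ))
          = Real.exp (l * (f (Fin.cons a ρ) - g ρ)) * Real.exp (l * (g ρ - μ)) := by
        intro a; rw [← Real.exp_add]; congr 1; ring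
      rw [Finset.sum_congr rfl fun a _ => hfactor a, ← Finset.sum_mul]
      rw [show (∑ a : Fin m, Real.exp (l * (f (Fin.cons a ρ) - g ρ))) * Real.exp (l * (g ρ - μ)) / ↑m
        = ((∑ a : Fin m, Real.exp (l * (f (Fin.cons a ρ) - g ρ))) / ↑m) * Real.exp (l * (g ρ - μ)) by ring]
      apply mul_le_mul_of_nonneg_right _ (Real.exp_nonneg _)
      exact avg_exp_le hm (sum_sub_tailAvg f hm ρ) (fun a => abs_sub_tailAvg_le hm hf ρ a) l
    calc expec n m (fun ρ => (∑ a : Fin m, Real.exp (l * (f (Fin.cons a ρ) - μ)))/m)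
        ≤ expec n m (fun ρ => Real.exp (l^2/2) * Real.exp (l * (g ρ - μ))) :=
          expec_mono hm point
      _ = Real.exp (l^2/2) * expec n m (fun ρ => Real.exp (l * (g ρ - expec n m g))) := by
          rw [expec_const_mul, hg]
      _ ≤ Real.exp (l^2/2) * Real.exp (n * l^2/2) :=
          mul_le_mul_of_nonneg_left (ih g (hf.tailAvg hm) l) (Real.exp_nonneg _)
      _ = Real.exp ((n+1 : ℕ) * l^2/2) := by rw [← Real.exp_add]; congr 1; push_cast; ring

lemma var_le (hm : 0 < m) : ∀ (n : ℕ) (f : (Fin n → Fin m) → ℝ), Lip n f →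
    expec n m (fun ω => (f ω - expec n m f)^2) ≤ n/4 := by
  intro n
  induction n with
  | zero =>
    intro f _
    rw [expec_zero_balls, expec_zero_balls]
    simp
  | succ n ih =>
    intro f hf
    have hm' : (0:ℝ) < m := by exact_mod_cast hm
    set g := tailAvg f with hgdef
    have hg : expec n m g = expec (n+1) m f := expec_tailAvg f
    set μ := expec (n+1) m f with hμ
    rw [expec_succ]
    have point : ∀ ρ : Fin n → Fin m,
        (∑ a : Fin m, (f (Fin.cons a ρ) - μ)^2)/m ≤ 1/4 + (g ρ - μ)^2 := by
      intro ρ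
      have expand : ∀ a : Fin m, (f (Fin.cons a ρ) - μ)^2
          = (f (Fin.cons a ρ) - g ρ)^2 + (2*(g ρ - μ))*(f (Fin.cons a ρ) - g ρ) + (g ρ - μ)^2 := by
        intro a; ring
      have hsum : (∑ a : Fin m, (f (Fin.cons a ρ) - μ)^2)
          = (∑ a : Fin m, (f (Fin.cons a ρ) - g ρ)^2) + (m:ℝ) * (g ρ - μ)^2 := by
        rw [Finset.sum_congr rfl fun a _ => expand a, Finset.sum_add_distrib,
          Finset.sum_add_distrib, ← Finset.mul_sum, sum_sub_tailAvg f hm, mul_zero, add_zero,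
          Finset.sum_const, card_univ, Fintype.card_fin, nsmul_eq_mul]
      rw [hsum, add_div]
      have h1 : (∑ a : Fin m, (f (Fin.cons a ρ) - g ρ)^2)/m ≤ 1/4 := by
        apply avg_sq_le hm (sum_sub_tailAvg f hm ρ)
        intro a b
        have heq : f (Fin.cons a ρ) - g ρ - (f (Fin.cons b ρ) - g ρ)
            = f (Fin.cons a ρ) - f (Fin.cons b ρ) := by ring
        rw [heq]; exact hf.head a b ρ
      have h2 : ((m:ℝ) * (g ρ - μ)^2)/m = (g ρ - μ)^2 := by field_simp
      rw [h2]; linarith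
    calc expec n m (fun ρ => (∑ a : Fin m, (f (Fin.cons a ρ) - μ)^2)/m)
        ≤ expec n m (fun ρ => 1/4 + (g ρ - μ)^2) := expec_mono hm point
      _ = 1/4 + expec n m (fun ρ => (g ρ - expec n m g)^2) := by
          rw [expec_add, expec_const hm, hg]
      _ ≤ 1/4 + n/4 := by linarith [ih g (hf.tailAvg hm)]
      _ = (n+1 : ℕ)/4 := by push_cast; ring

/-! ### Markov -/

lemma markov (hm : 0 < m) (n : ℕ) (P : (Fin n → Fin m) → Prop) (h : (Fin n → Fin m) → ℝ)
    (hh : ∀ ω, 0 ≤ h ω) {c : ℝ} (hc : 0 < c) (himp : ∀ ω, P ω → c ≤ h ω) :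
    prob n m P ≤ expec n m h / c := by
  classical
  unfold prob expec
  have hM : (0:ℝ) < (Fintype.card (Fin n → Fin m) : ℝ) := by
    rw [card_fun_real]; positivity
  rw [div_div, mul_comm, ← div_div]
  apply div_le_div_of_nonneg_right ?_ hM.le
  rw [le_div_iff₀ hc, mul_comm]
  calc c * ((Finset.univ.filter P).card : ℝ)
      = ∑ _ω ∈ Finset.univ.filter P, c := by
        rw [Finset.sum_const, nsmul_eq_mul, mul_comm]
    _ ≤ ∑ ω ∈ Finset.univ.filter P, h ω := by
        refine Finset.sum_le_sum fun ω hω => himp ω ?_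
        exact (Finset.mem_filter.1 hω).2
    _ ≤ ∑ ω : Fin n → Fin m, h ω := by
        exact Finset.sum_le_sum_of_subset_of_nonneg (Finset.subset_univ _)
          fun ω _ _ => hh ω


/-! ### Binomial moments -/

noncomputable def dev (i : Fin m) (n : ℕ) (ω : Fin n → Fin m) : ℝ :=
  (binCount n m i ω : ℝ) - n * (1/m)

noncomputable def del (i : Fin m) (a : Fin m) : ℝ := (if a = i then (1:ℝ) else 0) - 1/m

lemma dev_cons (i : Fin m) (n : ℕ) (a : Fin m) (ρ : Fin n → Fin m) :
    dev i (n+1) (Fin.cons a ρ) = dev i n ρ + del i a := by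
  unfold dev del; rw [binCount_cons]; push_cast; ring

lemma sum_del_pow (i : Fin m) (hm : 0 < m) (r : ℕ) :
    ∑ a : Fin m, (del i a)^r = (1 - 1/(m:ℝ))^r + ((m:ℝ)-1)*(-(1/m))^r := by
  rw [← Finset.sum_erase_add _ _ (Finset.mem_univ i)]
  have h1 : ∀ a ∈ Finset.univ.erase i, (del i a)^r = (-(1/(m:ℝ)))^r := by
    intro a ha; unfold del; rw [if_neg (Finset.ne_of_mem_erase ha)]; ring_nf
  rw [Finset.sum_congr rfl h1, Finset.sum_const,
    Finset.card_erase_of_mem (Finset.mem_univ i), card_univ, Fintype.card_fin, nsmul_eq_mul]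
  unfold del; rw [if_pos rfl]
  rw [Nat.cast_sub hm]
  push_cast
  ring

lemma sum_del (i : Fin m) (hm : 0 < m) : ∑ a : Fin m, del i a = 0 := by
  have h := sum_del_pow i hm 1
  have hm' : ((m:ℝ)) ≠ 0 := by positivity
  simp only [pow_one] at h
  rw [h]; field_simp
  ring

lemma sum_del_sq (i : Fin m) (hm : 0 < m) : ∑ a : Fin m, (del i a)^2 = 1 - 1/(m:ℝ) := by
  rw [sum_del_pow i hm 2]
  have hm' : ((m:ℝ)) ≠ 0 := by exact_mod_cast hm.ne'
  field_simp; ring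

lemma sum_del_pow4 (i : Fin m) (hm : 0 < m) :
    ∑ a : Fin m, (del i a)^4 = (1 - 1/(m:ℝ))*((1/m)^3 + (1 - 1/(m:ℝ))^3) := by
  rw [sum_del_pow i hm 4]
  have hm' : ((m:ℝ)) ≠ 0 := by exact_mod_cast hm.ne'
  field_simp; ring

lemma card_fun_nat_real (n : ℕ) : ((Finset.univ : Finset (Fin n → Fin m)).card : ℝ) = (m:ℝ)^n := by
  rw [card_univ, ← card_fun_real]

lemma sum_dev (i : Fin m) (hm : 0 < m) :
    ∀ n, ∑ ω : Fin n → Fin m, dev i n ω = 0 := by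
  intro n
  induction n with
  | zero =>
    have : ∀ ω : Fin 0 → Fin m, dev i 0 ω = 0 := by
      intro ω; unfold dev binCount; simp
    rw [Finset.sum_congr rfl fun ω _ => this ω]; simp
  | succ n ih =>
    rw [sum_cons]
    have h : ∀ a : Fin m, ∑ ρ : Fin n → Fin m, dev i (n+1) (Fin.cons a ρ)
        = (m:ℝ)^n * del i a := by
      intro a
      rw [Finset.sum_congr rfl fun ρ _ => dev_cons i n a ρ, Finset.sum_add_distrib, ih,
        Finset.sum_const, nsmul_eq_mul, card_fun_nat_real, zero_add]
    rw [Finset.sum_congr rfl fun a _ => h a, ← Finset.mul_sum, sum_del i hm, mul_zero]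

lemma sum_dev_sq (i : Fin m) (hm : 0 < m) :
    ∀ n, ∑ ω : Fin n → Fin m, (dev i n ω)^2
      = (m:ℝ)^n * ((n:ℝ) * (1/m) * (1 - 1/m)) := by
  intro n
  have hm' : ((m:ℝ)) ≠ 0 := by exact_mod_cast hm.ne'
  induction n with
  | zero =>
    have : ∀ ω : Fin 0 → Fin m, dev i 0 ω = 0 := by
      intro ω; unfold dev binCount; simp
    rw [Finset.sum_congr rfl fun ω _ => by rw [this ω]]; simp
  | succ n ih =>
    rw [sum_cons]
    have h : ∀ a : Fin m, ∑ ρ : Fin n → Fin m, (dev i (n+1) (Fin.cons a ρ))^2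
        = (m:ℝ)^n * ((n:ℝ) * (1/m) * (1 - 1/m)) + (m:ℝ)^n * (del i a)^2 := by
      intro a
      have e : ∀ ρ : Fin n → Fin m, (dev i (n+1) (Fin.cons a ρ))^2
          = (dev i n ρ)^2 + (2 * del i a) * (dev i n ρ) + (del i a)^2 := by
        intro ρ; rw [dev_cons]; ring
      rw [Finset.sum_congr rfl fun ρ _ => e ρ, Finset.sum_add_distrib, Finset.sum_add_distrib,
        ← Finset.mul_sum, sum_dev i hm n, mul_zero, add_zero, ih,
        Finset.sum_const, nsmul_eq_mul, card_fun_nat_real]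
    rw [Finset.sum_congr rfl fun a _ => h a, Finset.sum_add_distrib, Finset.sum_const,
      ← Finset.mul_sum, sum_del_sq i hm, card_univ, Fintype.card_fin, nsmul_eq_mul]
    push_cast
    field_simp
    ring

lemma sum_dev_pow4 (i : Fin m) (hm : 0 < m) :
    ∀ n, ∑ ω : Fin n → Fin m, (dev i n ω)^4
      = (m:ℝ)^n * (((n:ℝ) * (1/m) * (1 - 1/m)) * ((1/m)^3 + (1 - 1/(m:ℝ))^3)
          + 3 * (n:ℝ) * ((n:ℝ) - 1) * (1/m)^2 * (1 - 1/(m:ℝ))^2) := by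
  intro n
  have hm' : ((m:ℝ)) ≠ 0 := by exact_mod_cast hm.ne'
  induction n with
  | zero =>
    have : ∀ ω : Fin 0 → Fin m, dev i 0 ω = 0 := by
      intro ω; unfold dev binCount; simp
    rw [Finset.sum_congr rfl fun ω _ => by rw [this ω]]; simp
  | succ n ih =>
    rw [sum_cons]
    have h : ∀ a : Fin m, ∑ ρ : Fin n → Fin m, (dev i (n+1) (Fin.cons a ρ))^4
        = (m:ℝ)^n * (((n:ℝ) * (1/m) * (1 - 1/m)) * ((1/m)^3 + (1 - 1/(m:ℝ))^3)
            + 3 * (n:ℝ) * ((n:ℝ) - 1) * (1/m)^2 * (1 - 1/(m:ℝ))^2)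
          + (4 * del i a) * (∑ ρ : Fin n → Fin m, (dev i n ρ)^3)
          + (6 * (del i a)^2) * ((m:ℝ)^n * ((n:ℝ) * (1/m) * (1 - 1/m)))
          + (m:ℝ)^n * (del i a)^4 := by
      intro a
      have e : ∀ ρ : Fin n → Fin m, (dev i (n+1) (Fin.cons a ρ))^4
          = (dev i n ρ)^4 + (4 * del i a) * (dev i n ρ)^3
            + (6 * (del i a)^2) * (dev i n ρ)^2 + (4 * (del i a)^3) * (dev i n ρ)
            + (del i a)^4 := by
        intro ρ; rw [dev_cons]; ring
      rw [Finset.sum_congr rfl fun ρ _ => e ρ]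
      rw [Finset.sum_add_distrib, Finset.sum_add_distrib, Finset.sum_add_distrib,
        Finset.sum_add_distrib, ← Finset.mul_sum, ← Finset.mul_sum, ← Finset.mul_sum,
        sum_dev i hm n, mul_zero, add_zero, ih, sum_dev_sq i hm n,
        Finset.sum_const, nsmul_eq_mul, card_fun_nat_real]
    rw [Finset.sum_congr rfl fun a _ => h a]
    rw [Finset.sum_add_distrib, Finset.sum_add_distrib, Finset.sum_add_distrib,
      Finset.sum_const, card_univ, Fintype.card_fin, nsmul_eq_mul]
    have k1 : ∑ a : Fin m, (4 * del i a) * (∑ ρ : Fin n → Fin m, (dev i n ρ)^3)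
        = 4 * (∑ a : Fin m, del i a) * (∑ ρ : Fin n → Fin m, (dev i n ρ)^3) := by
      rw [← Finset.sum_mul, ← Finset.mul_sum]
    have k2 : ∑ a : Fin m, (6 * (del i a)^2) * ((m:ℝ)^n * ((n:ℝ) * (1/m) * (1 - 1/m)))
        = 6 * (∑ a : Fin m, (del i a)^2) * ((m:ℝ)^n * ((n:ℝ) * (1/m) * (1 - 1/m))) := by
      rw [← Finset.sum_mul, ← Finset.mul_sum]
    have k3 : ∑ a : Fin m, (m:ℝ)^n * (del i a)^4
        = (m:ℝ)^n * ((1 - 1/(m:ℝ))*((1/m)^3 + (1 - 1/(m:ℝ))^3)) := by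
      rw [← Finset.mul_sum, sum_del_pow4 i hm]
    rw [k1, k2, k3, sum_del i hm, sum_del_sq i hm]
    push_cast
    field_simp
    ring

lemma expec_dev_sq (i : Fin m) (hm : 0 < m) (n : ℕ) :
    expec n m (fun ω => (dev i n ω)^2) = (n:ℝ) * (1/m) * (1 - 1/m) := by
  unfold expec
  rw [sum_dev_sq i hm n, card_fun_real]
  have : ((m:ℝ))^n ≠ 0 := by
    have : ((m:ℝ)) ≠ 0 := by exact_mod_cast hm.ne'
    positivity
  field_simp

lemma expec_dev_pow4 (i : Fin m) (hm : 0 < m) (n : ℕ) :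
    expec n m (fun ω => (dev i n ω)^4)
      = ((n:ℝ) * (1/m) * (1 - 1/m)) * ((1/m)^3 + (1 - 1/(m:ℝ))^3)
          + 3 * (n:ℝ) * ((n:ℝ) - 1) * (1/m)^2 * (1 - 1/(m:ℝ))^2 := by
  unfold expec
  rw [sum_dev_pow4 i hm n, card_fun_real]
  have : ((m:ℝ))^n ≠ 0 := by
    have : ((m:ℝ)) ≠ 0 := by exact_mod_cast hm.ne'
    positivity
  field_simp

/-! ### Cauchy-Schwarz chain -/

lemma sum_pow_chain {ι : Type*} [Fintype ι] (c : ι → ℝ)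
    (hS2 : 0 < ∑ ω : ι, (c ω)^2) :
    (∑ ω : ι, (c ω)^2)^3 ≤ (∑ ω : ι, |c ω|)^2 * ∑ ω : ι, (c ω)^4 := by
  set S1 := ∑ ω : ι, |c ω| with hS1def
  set S2 := ∑ ω : ι, (c ω)^2 with hS2def
  set S3 := ∑ ω : ι, |c ω|^3 with hS3def
  set S4 := ∑ ω : ι, (c ω)^4 with hS4def
  have cs1 : S2^2 ≤ S1 * S3 := by
    have h := Finset.sum_mul_sq_le_sq_mul_sq Finset.univ
      (fun ω => Real.sqrt |c ω|) (fun ω => Real.sqrt (|c ω|^3))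
    have e1 : ∀ ω : ι, Real.sqrt |c ω| * Real.sqrt (|c ω|^3) = (c ω)^2 := by
      intro ω
      rw [← Real.sqrt_mul (abs_nonneg _)]
      have : |c ω| * |c ω|^3 = ((c ω)^2)^2 := by
        have h4 : |c ω| * |c ω|^3 = (|c ω|^2)^2 := by ring
        rw [h4, sq_abs]
      rw [this, Real.sqrt_sq (sq_nonneg _)]
    have e2 : ∀ ω : ι, Real.sqrt |c ω| ^ 2 = |c ω| := fun ω => Real.sq_sqrt (abs_nonneg _)
    have e3 : ∀ ω : ι, Real.sqrt (|c ω|^3) ^ 2 = |c ω|^3 := fun ω =>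
      Real.sq_sqrt (by positivity)
    rw [Finset.sum_congr rfl fun ω _ => e1 ω, Finset.sum_congr rfl fun ω _ => e2 ω,
      Finset.sum_congr rfl fun ω _ => e3 ω] at h
    exact h
  have cs2 : S3^2 ≤ S2 * S4 := by
    have h := Finset.sum_mul_sq_le_sq_mul_sq Finset.univ
      (fun ω => |c ω|) (fun ω => (c ω)^2)
    have e1 : ∀ ω : ι, |c ω| * (c ω)^2 = |c ω|^3 := by
      intro ω; rw [← sq_abs]; ring
    have e2 : ∀ ω : ι, |c ω|^2 = (c ω)^2 := fun ω => sq_abs _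
    have e3 : ∀ ω : ι, ((c ω)^2)^2 = (c ω)^4 := fun ω => by ring
    rw [Finset.sum_congr rfl fun ω _ => e1 ω, Finset.sum_congr rfl fun ω _ => e2 ω,
      Finset.sum_congr rfl fun ω _ => e3 ω] at h
    exact h
  have hS1 : 0 ≤ S1 := Finset.sum_nonneg fun ω _ => abs_nonneg _
  have e1 : S2^4 ≤ (S1*S3)^2 := by
    calc S2^4 = (S2^2)^2 := by ring
      _ ≤ (S1*S3)^2 := pow_le_pow_left₀ (sq_nonneg _) cs1 2
  have e3 : S1^2*S3^2 ≤ S1^2*(S2*S4) := mul_le_mul_of_nonneg_left cs2 (sq_nonneg S1)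
  have key : S2 * S2^3 ≤ S2 * (S1^2*S4) := by
    calc S2 * S2^3 = S2^4 := by ring
      _ ≤ (S1*S3)^2 := e1
      _ = S1^2*S3^2 := by ring
      _ ≤ S1^2*(S2*S4) := e3
      _ = S2 * (S1^2*S4) := by ring
  exact le_of_mul_le_mul_left key hS2


/-! ### overflowX structure -/

lemma max_half (z : ℝ) : max z 0 = (z + |z|)/2 := by
  rcases le_total z 0 with h|h
  · rw [max_eq_right h, abs_of_nonpos h]; ring
  · rw [max_eq_left h, abs_of_nonneg h]; ring

lemma overflow_half {n k : ℕ} (hn : (n:ℝ) = (k:ℝ) * m) (ω : Fin n → Fin m) :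
    overflowX n m k ω = (1/2) * ∑ i : Fin m, |(binCount n m i ω : ℝ) - k| := by
  unfold overflowX
  rw [Finset.sum_congr rfl fun i _ => max_half _]
  have h1 : ∑ i : Fin m, (((binCount n m i ω : ℝ) - k) + |(binCount n m i ω : ℝ) - k|)/2
      = ((∑ i : Fin m, ((binCount n m i ω : ℝ) - k)) + ∑ i : Fin m, |(binCount n m i ω : ℝ) - k|)/2 := by
    rw [← Finset.sum_add_distrib, ← Finset.sum_div]
  rw [h1, Finset.sum_sub_distrib, sum_binCount, Finset.sum_const, card_univ, Fintype.card_fin,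
    nsmul_eq_mul, hn]
  ring

lemma lip_overflowX (n k : ℕ) : Lip n (overflowX n m k) := by
  intro ω j a
  rcases eq_or_ne a (ω j) with rfl|hab
  · rw [Function.update_eq_self]; simp
  · have hzero : ∀ i ∈ (Finset.univ : Finset (Fin m)), i ∉ ({a, ω j} : Finset (Fin m)) →
        (max ((binCount n m i (Function.update ω j a) : ℝ) - k) 0
          - max ((binCount n m i ω : ℝ) - k) 0) = 0 := by
      intro i _ hi
      rw [Finset.mem_insert, Finset.mem_singleton] at hi
      push_neg at hi
      rw [binCount_update n ω j a i, if_neg (fun h => hi.1 h.symm),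
        if_neg (fun h => hi.2 h.symm)]
      ring_nf
    have hsum : overflowX n m k (Function.update ω j a) - overflowX n m k ω
        = ∑ i ∈ ({a, ω j} : Finset (Fin m)),
            (max ((binCount n m i (Function.update ω j a) : ℝ) - k) 0
              - max ((binCount n m i ω : ℝ) - k) 0) := by
      unfold overflowX
      rw [← Finset.sum_sub_distrib]
      exact (Finset.sum_subset (Finset.subset_univ _) hzero).symm
    rw [hsum, Finset.sum_pair hab]
    have hA : (binCount n m a (Function.update ω j a) : ℝ) = (binCount n m a ω : ℝ) + 1 := by
      rw [binCount_update n ω j a a, if_pos rfl, if_neg (Ne.symm hab)]; ring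
    have hB : (binCount n m (ω j) (Function.update ω j a) : ℝ)
        = (binCount n m (ω j) ω : ℝ) - 1 := by
      rw [binCount_update n ω j a (ω j), if_neg hab, if_pos rfl]; ring
    rw [hA, hB]
    set x := (binCount n m a ω : ℝ) with hx
    set y := (binCount n m (ω j) ω : ℝ) with hy
    have u1 : max (x - (k:ℝ)) 0 ≤ max (x + 1 - (k:ℝ)) 0 := max_le_max (by linarith) le_rfl
    have u2 : max (x + 1 - (k:ℝ)) 0 ≤ max (x - (k:ℝ)) 0 + 1 :=
      max_le (by linarith [le_max_left (x - (k:ℝ)) 0]) (by linarith [le_max_right (x - (k:ℝ)) 0])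
    have v1 : max (y - 1 - (k:ℝ)) 0 ≤ max (y - (k:ℝ)) 0 := max_le_max (by linarith) le_rfl
    have v2 : max (y - (k:ℝ)) 0 ≤ max (y - 1 - (k:ℝ)) 0 + 1 :=
      max_le (by linarith [le_max_left (y - 1 - (k:ℝ)) 0]) (by linarith [le_max_right (y - 1 - (k:ℝ)) 0])
    rw [abs_le]
    constructor <;> linarith

end SpareAux


set_option maxHeartbeats 2000000 in
open SpareAux Real in
/-- With spare capacity `1.1·E[X]` (i.e. `δ = 0.1`), the
probability that the spare overflows satisfies
`P(X > 1.1·E[X]) ≤ min(2πk/(0.01·0.99·n), exp(−0.01·m·0.99·(1−p)/(πk)))`. -/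
theorem spare_overflow_probability (n m k : ℕ) (hn : n = k * m)
    (hk : 20 ≤ k) (hn5 : 5 * k ≤ n) (p : ℝ) (hp : p = 1 / (m : ℝ)) :
    prob n m (fun ω => 1.1 * expec n m (overflowX n m k) < overflowX n m k ω)
      ≤ min (2 * Real.pi * (k : ℝ) / (0.01 * 0.99 * (n : ℝ)))
          (Real.exp (-0.01 * (m : ℝ) * 0.99 * (1 - p) / (Real.pi * (k : ℝ)))) := by
  classical
  have hk0 : 0 < k := by omega
  have hm5 : 5 ≤ m := by
    have h1 : k * 5 ≤ k * m := by rw [← hn]; omega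
    exact Nat.le_of_mul_le_mul_left h1 hk0
  have hm0 : 0 < m := by omega
  have hn0 : 0 < n := by
    rw [hn]; exact Nat.mul_pos hk0 hm0
  have hmR : (5:ℝ) ≤ (m:ℝ) := by exact_mod_cast hm5
  have hmR0 : (0:ℝ) < (m:ℝ) := by linarith
  have hkR : (20:ℝ) ≤ (k:ℝ) := by exact_mod_cast hk
  have hkR0 : (0:ℝ) < (k:ℝ) := by linarith
  have hnR : (n:ℝ) = (k:ℝ) * m := by rw [hn]; push_cast; ring
  have hnR0 : (0:ℝ) < (n:ℝ) := by rw [hnR]; positivity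
  have hpi : (3.141592:ℝ) ≤ Real.pi := by
    have := Real.pi_gt_d6; linarith
  have hpi0 : (0:ℝ) < Real.pi := by linarith
  set q : ℝ := 1 - 1/(m:ℝ) with hqdef
  clear_value q
  have hq1 : q ≤ 1 := by
    rw [hqdef]; have : (0:ℝ) < 1/(m:ℝ) := by positivity
    linarith
  have hq45 : (4/5:ℝ) ≤ q := by
    rw [hqdef]
    have : 1/(m:ℝ) ≤ 1/5 := by
      apply one_div_le_one_div_of_le (by norm_num) hmR
    linarith
  have hq0 : (0:ℝ) < q := by linarith
  have hr16 : (16:ℝ) ≤ (k:ℝ)*q := by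
    have h := mul_le_mul hkR hq45 (by norm_num) (by linarith : (0:ℝ) ≤ (k:ℝ))
    linarith
  have hr0 : (0:ℝ) < (k:ℝ)*q := by linarith
  have hD0 : (0:ℝ) < 1 + 3*((k:ℝ)*q) := by linarith
  have hnp : (n:ℝ) * (1/m) = (k:ℝ) := by rw [hnR]; field_simp
  have hdev : ∀ (i : Fin m) (ω : Fin n → Fin m),
      SpareAux.dev i n ω = (binCount n m i ω : ℝ) - k := by
    intro i ω; unfold SpareAux.dev; rw [hnp]
  set X := overflowX n m k with hX
  set μ := expec n m X with hμ
  clear_value X μ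
  -- second moment
  have hA2 : ∀ i : Fin m, expec n m (fun ω => (SpareAux.dev i n ω)^2) = (k:ℝ)*q := by
    intro i
    rw [SpareAux.expec_dev_sq i hm0 n, hnp, ← hqdef]
  -- fourth moment bound
  have hA4 : ∀ i : Fin m,
      expec n m (fun ω => (SpareAux.dev i n ω)^4) ≤ ((k:ℝ)*q) * (1 + 3*((k:ℝ)*q)) := by
    intro i
    rw [SpareAux.expec_dev_pow4 i hm0 n, ← hqdef]
    have hP0 : (0:ℝ) < 1/(m:ℝ) := by positivity
    have hP5 : (1:ℝ)/(m:ℝ) ≤ 1/5 := one_div_le_one_div_of_le (by norm_num) hmR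
    have hnpq : (n:ℝ)*(1/m)*q = (k:ℝ)*q := by rw [hnp]
    have hn1 : (1:ℝ) ≤ (n:ℝ) := by
      have h1 : (1:ℕ) ≤ n := hn0
      exact_mod_cast h1
    have t1 : (1/(m:ℝ))^3 + q^3 ≤ 1 := by
      have hP1 : 1/(m:ℝ) ≤ 1 := by linarith
      have e1 : (1/(m:ℝ))^3 ≤ 1/(m:ℝ) := by
        nlinarith [mul_nonneg (mul_nonneg hP0.le hP0.le) (sub_nonneg.2 hP1),
          mul_nonneg hP0.le (sub_nonneg.2 hP1)]
      have e2 : q^3 ≤ q := by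
        nlinarith [mul_nonneg (mul_nonneg hq0.le hq0.le) (sub_nonneg.2 hq1),
          mul_nonneg hq0.le (sub_nonneg.2 hq1)]
      have e3 : 1/(m:ℝ) + q = 1 := by rw [hqdef]; ring
      linarith
    have t2 : 3*(n:ℝ)*((n:ℝ)-1)*(1/(m:ℝ))^2*q^2 ≤ 3*((k:ℝ)*q)^2 := by
      have e : (n:ℝ)*((n:ℝ)-1)*(1/(m:ℝ))^2*q^2
          = ((k:ℝ)*q)*((k:ℝ)*q) - ((k:ℝ)*q)*((1/(m:ℝ))*q) := by
        rw [← hnpq]; ring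
      have hpos : 0 ≤ ((k:ℝ)*q)*((1/(m:ℝ))*q) := by positivity
      linarith [e, hpos]
    have u1 : (n:ℝ)*(1/m)*q*((1/(m:ℝ))^3+q^3) ≤ (k:ℝ)*q := by
      rw [hnpq]
      calc (k:ℝ)*q*((1/(m:ℝ))^3+q^3) ≤ (k:ℝ)*q*1 := mul_le_mul_of_nonneg_left t1 hr0.le
        _ = (k:ℝ)*q := mul_one _
    linarith [u1, t2]
  -- first absolute moment lower bound
  have hA1sq : ∀ i : Fin m,
      ((k:ℝ)*q)^2/(1 + 3*((k:ℝ)*q)) ≤ (expec n m (fun ω => |SpareAux.dev i n ω|))^2 := by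
    intro i
    have hMpos : (0:ℝ) < (m:ℝ)^n := by positivity
    have hS2pos : (0:ℝ) < ∑ ω : Fin n → Fin m, (SpareAux.dev i n ω)^2 := by
      rw [SpareAux.sum_dev_sq i hm0 n]
      have e1 : (n:ℝ)*(1/(m:ℝ))*(1-1/(m:ℝ)) = (k:ℝ)*q := by rw [hnp, ← hqdef]
      rw [e1]
      exact mul_pos hMpos hr0
    have hchain := SpareAux.sum_pow_chain (fun ω : Fin n → Fin m => SpareAux.dev i n ω) hS2pos
    set A1 := expec n m (fun ω => |SpareAux.dev i n ω|) with hA1def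
    set A4v := expec n m (fun ω => (SpareAux.dev i n ω)^4) with hA4def
    have hA1nn : 0 ≤ A1 := SpareAux.expec_nonneg (fun ω => abs_nonneg _)
    have hA4nn : 0 ≤ A4v := SpareAux.expec_nonneg (fun ω => by positivity)
    have e1 : ∑ ω : Fin n → Fin m, |SpareAux.dev i n ω| = A1 * (m:ℝ)^n := by
      rw [hA1def]; unfold expec; rw [card_fun_real, div_mul_cancel₀ _ hMpos.ne']
    have e2 : ∑ ω : Fin n → Fin m, (SpareAux.dev i n ω)^2 = ((k:ℝ)*q) * (m:ℝ)^n := by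
      have h := hA2 i; unfold expec at h; rw [card_fun_real] at h
      rw [div_eq_iff hMpos.ne'] at h; exact h
    have e4 : ∑ ω : Fin n → Fin m, (SpareAux.dev i n ω)^4 = A4v * (m:ℝ)^n := by
      rw [hA4def]; unfold expec; rw [card_fun_real, div_mul_cancel₀ _ hMpos.ne']
    rw [e1, e2, e4] at hchain
    have key : ((k:ℝ)*q)^3 ≤ A1^2 * A4v := by
      have h3 : (0:ℝ) < ((m:ℝ)^n)^3 := by positivity
      have hh : (((k:ℝ)*q)^3) * ((m:ℝ)^n)^3 ≤ (A1^2 * A4v) * ((m:ℝ)^n)^3 := by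
        calc (((k:ℝ)*q)^3) * ((m:ℝ)^n)^3 = (((k:ℝ)*q) * (m:ℝ)^n)^3 := by ring
          _ ≤ (A1 * (m:ℝ)^n)^2 * (A4v * (m:ℝ)^n) := hchain
          _ = (A1^2 * A4v) * ((m:ℝ)^n)^3 := by ring
      exact le_of_mul_le_mul_right hh h3
    have key2 : ((k:ℝ)*q)^3 ≤ A1^2 * (((k:ℝ)*q) * (1 + 3*((k:ℝ)*q))) :=
      key.trans (mul_le_mul_of_nonneg_left (hA4 i) (sq_nonneg A1))
    rw [div_le_iff₀ hD0]
    have hh2 : ((k:ℝ)*q) * (((k:ℝ)*q)^2) ≤ ((k:ℝ)*q) * (A1^2 * (1 + 3*((k:ℝ)*q))) := by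
      calc ((k:ℝ)*q) * (((k:ℝ)*q)^2) = ((k:ℝ)*q)^3 := by ring
        _ ≤ A1^2 * (((k:ℝ)*q) * (1 + 3*((k:ℝ)*q))) := key2
        _ = ((k:ℝ)*q) * (A1^2 * (1 + 3*((k:ℝ)*q))) := by ring
    exact le_of_mul_le_mul_left hh2 hr0
  -- μ lower bound
  have hμeq : μ = (1/2) * ∑ i : Fin m, expec n m (fun ω => |SpareAux.dev i n ω|) := by
    rw [hμ, hX]
    have hfun : overflowX n m k = fun ω => (1/2) * ∑ i : Fin m, |SpareAux.dev i n ω| := by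
      funext ω
      rw [SpareAux.overflow_half hnR ω]
      congr 1
      exact (Finset.sum_congr rfl fun i _ => by rw [hdev i ω]).symm
    rw [hfun, SpareAux.expec_const_mul, SpareAux.expec_sum]
  set L := Real.sqrt (((k:ℝ)*q)^2/(1 + 3*((k:ℝ)*q))) with hLdef
  have hL0 : 0 < L := Real.sqrt_pos.2 (div_pos (pow_pos hr0 2) hD0)
  have hL2 : L^2 = ((k:ℝ)*q)^2/(1 + 3*((k:ℝ)*q)) :=
    Real.sq_sqrt (div_pos (pow_pos hr0 2) hD0).le
  clear_value L
  have hA1L : ∀ i : Fin m, L ≤ expec n m (fun ω => |SpareAux.dev i n ω|) := by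
    intro i
    have h := hA1sq i
    calc L ≤ Real.sqrt ((expec n m (fun ω => |SpareAux.dev i n ω|))^2) := by
          rw [hLdef]; exact Real.sqrt_le_sqrt h
      _ = expec n m (fun ω => |SpareAux.dev i n ω|) :=
          Real.sqrt_sq (SpareAux.expec_nonneg (fun ω => abs_nonneg _))
  have hμlb : (m:ℝ)/2 * L ≤ μ := by
    rw [hμeq]
    have h : ∑ _i : Fin m, L ≤ ∑ i : Fin m, expec n m (fun ω => |SpareAux.dev i n ω|) :=
      Finset.sum_le_sum fun i _ => hA1L i
    rw [Finset.sum_const, card_univ, Fintype.card_fin, nsmul_eq_mul] at h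
    linarith
  have hμ0 : 0 < μ := by
    have h := mul_pos hmR0 hL0
    linarith [hμlb, h]
  set t := μ/10 with htdef
  clear_value t
  have ht0 : 0 < t := by rw [htdef]; linarith
  have htlb : (m:ℝ)/20 * L ≤ t := by rw [htdef]; linarith
  set T0 := (m:ℝ)^2/400 * (((k:ℝ)*q)^2/(1 + 3*((k:ℝ)*q))) with hT0def
  clear_value T0
  have hT0pos : 0 < T0 := by
    rw [hT0def]
    exact mul_pos (by positivity) (div_pos (pow_pos hr0 2) hD0)
  have ht2 : T0 ≤ t^2 := by
    have hnnL : (0:ℝ) ≤ (m:ℝ)/20*L := by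
      have h := mul_pos hmR0 hL0
      linarith
    have h := pow_le_pow_left₀ hnnL htlb 2
    have heq : ((m:ℝ)/20*L)^2 = (m:ℝ)^2/400*(((k:ℝ)*q)^2/(1 + 3*((k:ℝ)*q))) := by
      rw [mul_pow, hL2]; ring
    rw [hT0def, ← heq]
    exact h
  -- Lipschitz
  have hlip : SpareAux.Lip n X := by rw [hX]; exact SpareAux.lip_overflowX n k
  have himp : ∀ ω, (1.1 * μ < X ω) → t ≤ X ω - μ := by
    intro ω h; rw [htdef]; linarith
  -- Chebyshev branch
  have hvar : expec n m (fun ω => (X ω - μ)^2) ≤ (n:ℝ)/4 := by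
    have h := SpareAux.var_le hm0 n X hlip
    rwa [← hμ] at h
  have hcheb : prob n m (fun ω => 1.1 * μ < X ω) ≤ ((n:ℝ)/4)/t^2 := by
    have hmk := SpareAux.markov hm0 n (fun ω => 1.1 * μ < X ω) (fun ω => (X ω - μ)^2)
      (fun ω => sq_nonneg _) (c := t^2) (by positivity)
      (fun ω h => pow_le_pow_left₀ ht0.le (himp ω h) 2)
    exact hmk.trans (div_le_div_of_nonneg_right hvar (by positivity : (0:ℝ) < t^2).le)
  -- Chernoff branch
  set l := t/(n:ℝ) with hldef
  clear_value l
  have hl0 : 0 < l := by rw [hldef]; positivity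
  have hmgf : expec n m (fun ω => Real.exp (l * (X ω - μ))) ≤ Real.exp ((n:ℝ)*l^2/2) := by
    have h := SpareAux.mgf_le hm0 n X hlip l
    rwa [← hμ] at h
  have hcher : prob n m (fun ω => 1.1 * μ < X ω) ≤ Real.exp (-(t^2/(2*(n:ℝ)))) := by
    have hmk := SpareAux.markov hm0 n (fun ω => 1.1 * μ < X ω)
      (fun ω => Real.exp (l * (X ω - μ))) (fun ω => (Real.exp_nonneg _))
      (c := Real.exp (l*t)) (Real.exp_pos _)
      (fun ω h => Real.exp_le_exp.2 (mul_le_mul_of_nonneg_left (himp ω h) hl0.le))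
    calc prob n m (fun ω => 1.1 * μ < X ω)
        ≤ expec n m (fun ω => Real.exp (l * (X ω - μ))) / Real.exp (l*t) := hmk
      _ ≤ Real.exp ((n:ℝ)*l^2/2) / Real.exp (l*t) :=
          div_le_div_of_nonneg_right hmgf (Real.exp_pos _).le
      _ = Real.exp ((n:ℝ)*l^2/2 - l*t) := by rw [Real.exp_sub]
      _ = Real.exp (-(t^2/(2*(n:ℝ)))) := by
          congr 1
          rw [hldef]
          field_simp
          ring
  -- core scalar inequalities
  have hcoreA : 0.99*(1 + 3*((k:ℝ)*q)) ≤ 2*Real.pi*((k:ℝ)*q)*q := by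
    nlinarith [mul_nonneg (mul_nonneg (sub_nonneg.2 hpi) hr0.le) hq0.le,
      mul_nonneg (sub_nonneg.2 hq45) hr0.le, hr16, hq45]
  have hcoreB : 7.92*(1 + 3*((k:ℝ)*q)) ≤ Real.pi*(k:ℝ)*((k:ℝ)*q) := by
    nlinarith [mul_nonneg (sub_nonneg.2 hpi) (mul_nonneg hkR0.le hr0.le),
      mul_nonneg (sub_nonneg.2 hkR) hr0.le, hr16]
  -- assemble
  apply le_min
  · -- Chebyshev side
    have step1 : prob n m (fun ω => 1.1 * μ < X ω) ≤ ((n:ℝ)/4)/T0 :=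
      hcheb.trans (div_le_div_of_nonneg_left (by positivity) hT0pos ht2)
    refine step1.trans ?_
    have hT0eq : T0 = ((m:ℝ)^2*((k:ℝ)*q)^2/400)/(1 + 3*((k:ℝ)*q)) := by
      rw [hT0def]; ring
    have hden1 : (0:ℝ) < (m:ℝ)^2*((k:ℝ)*q)^2/400 :=
      div_pos (mul_pos (pow_pos hmR0 2) (pow_pos hr0 2)) (by norm_num)
    have hden2 : (0:ℝ) < 0.01*0.99*(n:ℝ) := by
      have := hnR0; nlinarith
    rw [hT0eq, div_div_eq_mul_div, div_le_div_iff₀ hden1 hden2]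
    rw [hnR]
    calc ((k:ℝ)*m/4*(1 + 3*((k:ℝ)*q)))*(0.01*0.99*((k:ℝ)*m))
        = ((k:ℝ)^2*(m:ℝ)^2/400)*(0.99*(1 + 3*((k:ℝ)*q))) := by ring
      _ ≤ ((k:ℝ)^2*(m:ℝ)^2/400)*(2*Real.pi*((k:ℝ)*q)*q) :=
          mul_le_mul_of_nonneg_left hcoreA (by positivity)
      _ = 2*Real.pi*(k:ℝ)*((m:ℝ)^2*((k:ℝ)*q)^2/400) := by ring
  · -- Chernoff side
    refine hcher.trans ?_
    rw [Real.exp_le_exp, hp, ← hqdef]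
    have hstep : 0.01*(m:ℝ)*0.99*q/(Real.pi*(k:ℝ)) ≤ t^2/(2*(n:ℝ)) := by
      have h1 : T0/(2*(n:ℝ)) ≤ t^2/(2*(n:ℝ)) :=
        div_le_div_of_nonneg_right ht2 (by linarith : (0:ℝ) < 2*(n:ℝ)).le
      refine le_trans ?_ h1
      have hT0eq : T0/(2*(n:ℝ))
          = ((m:ℝ)^2*((k:ℝ)*q)^2/400)/((1 + 3*((k:ℝ)*q))*(2*(n:ℝ))) := by
        rw [hT0def]
        field_simp
      have hden1 : (0:ℝ) < Real.pi*(k:ℝ) := mul_pos hpi0 hkR0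
      have hden2 : (0:ℝ) < (1 + 3*((k:ℝ)*q))*(2*(n:ℝ)) :=
        mul_pos hD0 (by linarith)
      rw [hT0eq, div_le_div_iff₀ hden1 hden2]
      rw [hnR]
      calc 0.01*(m:ℝ)*0.99*q*((1 + 3*((k:ℝ)*q))*(2*((k:ℝ)*m)))
          = ((k:ℝ)*(m:ℝ)^2*q/400)*(7.92*(1 + 3*((k:ℝ)*q))) := by ring
        _ ≤ ((k:ℝ)*(m:ℝ)^2*q/400)*(Real.pi*(k:ℝ)*((k:ℝ)*q)) :=
            mul_le_mul_of_nonneg_left hcoreB (by positivity)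
        _ = (m:ℝ)^2*((k:ℝ)*q)^2/400*(Real.pi*(k:ℝ)) := by ring
    have hfin : -(t^2/(2*(n:ℝ))) ≤ -(0.01*(m:ℝ)*0.99*q/(Real.pi*(k:ℝ))) := by linarith
    calc -(t^2/(2*(n:ℝ))) ≤ -(0.01*(m:ℝ)*0.99*q/(Real.pi*(k:ℝ))) := hfin
      _ = -0.01*(m:ℝ)*0.99*q/(Real.pi*(k:ℝ)) := by ring
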